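/- Suppose a finite graph G = (V,E) with |V| = n satisfies |E(A,B) - p|A||B|| ≤ λ√(|A||B|) for all A,B ⊆ V, where E(A,B) = #{(u,v) ∈ E : u ∈ A, v ∈ B}. If at some time t the global mean m(t) = (1/n)Σ_i x_i(t) satisfies |m(t)| ≥ α > 0, then the number of vertices i with x_i(t+1) = -sgn(m(t)) is at most 2λ²/(α² p² n). -/

import Mathlib

open Finset

lemma aux_majority
    {V : Type*} [Fintype V] [DecidableEq V]
    (G : SimpleGraph V) [DecidableRel G.Adj]
    (p lam : ℝ) (hp : 0 < p)
    (hmix : ∀ A B : Finset V,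
      |((((A ×ˢ B).filter (fun e => G.Adj e.1 e.2)).card : ℝ))
          - p * A.card * B.card|
        ≤ lam * Real.sqrt (A.card * B.card))
    (y z : V → ℝ)
    (hy : ∀ i, y i = 1 ∨ y i = -1)
    (hdyn : ∀ i, z i = Real.sign (∑ j ∈ G.neighborFinset i, y j))
    (α : ℝ) (hα : 0 < α)
    (hmean : α * (Fintype.card V : ℝ) ≤ ∑ i, y i) :
    ((Finset.univ.filter (fun i : V => z i = -1)).card : ℝ)
      ≤ 2 * lam ^ 2 / (α ^ 2 * p ^ 2 * (Fintype.card V)) := by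
  classical
  set P := univ.filter (fun i : V => y i = 1) with hPdef
  set N := univ.filter (fun i : V => y i = -1) with hNdef
  set B := univ.filter (fun i : V => z i = -1) with hBdef
  rcases B.eq_empty_or_nonempty with hBe | hBne
  · rw [hBe]; simp; positivity
  have hbpos : 0 < (B.card : ℝ) := by exact_mod_cast card_pos.mpr hBne
  have hnpos : 0 < ((Fintype.card V : ℕ) : ℝ) := by
    have : 0 < Fintype.card V := Fintype.card_pos_iff.mpr ⟨hBne.choose⟩
    exact_mod_cast this
  have hlam : 0 ≤ lam := by
    have h := (abs_nonneg _).trans (hmix B B)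
    have hs : Real.sqrt ((B.card : ℝ) * B.card) = B.card :=
      Real.sqrt_mul_self (by positivity)
    rw [hs] at h
    nlinarith
  have hdisj : Disjoint P N := by
    rw [Finset.disjoint_left]
    intro i hiP hiN
    have h1 : y i = 1 := (mem_filter.mp hiP).2
    have h2 : y i = -1 := (mem_filter.mp hiN).2
    rw [h1] at h2; norm_num at h2
  have hunion : P ∪ N = univ := by
    ext i
    simp only [hPdef, hNdef, mem_union, mem_filter, mem_univ, true_and, iff_true]
    exact hy i
  have hcard : (P.card : ℝ) + N.card = Fintype.card V := by
    have := card_union_of_disjoint hdisj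
    rw [hunion, card_univ] at this
    exact_mod_cast this.symm
  have hsum : ∑ i, y i = (P.card : ℝ) - N.card := by
    rw [← hunion, sum_union hdisj]
    have h1 : ∑ i ∈ P, y i = (P.card : ℝ) := by
      rw [Finset.sum_congr rfl (fun i hi => (mem_filter.mp hi).2)]
      simp [hPdef]
    have h2 : ∑ i ∈ N, y i = -(N.card : ℝ) := by
      rw [Finset.sum_congr rfl (fun i hi => (mem_filter.mp hi).2)]
      simp [hNdef]
    rw [h1, h2]; ring
  have hnbr : ∀ i, ∑ j ∈ G.neighborFinset i, y j
      = (∑ j ∈ P, (if G.Adj i j then (1:ℝ) else 0))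
        - ∑ j ∈ N, (if G.Adj i j then (1:ℝ) else 0) := by
    intro i
    have h0 : ∑ j ∈ G.neighborFinset i, y j
        = ∑ j ∈ univ, if G.Adj i j then y j else 0 := by
      rw [SimpleGraph.neighborFinset_eq_filter, sum_filter]
    rw [h0, ← hunion, sum_union hdisj]
    have e1 : ∑ j ∈ P, (if G.Adj i j then y j else 0)
        = ∑ j ∈ P, (if G.Adj i j then (1:ℝ) else 0) :=
      Finset.sum_congr rfl fun j hj => by rw [(mem_filter.mp hj).2]
    have e2 : ∑ j ∈ N, (if G.Adj i j then y j else 0)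
        = ∑ j ∈ N, -(if G.Adj i j then (1:ℝ) else 0) :=
      Finset.sum_congr rfl fun j hj => by rw [(mem_filter.mp hj).2]; split <;> simp
    rw [e1, e2, Finset.sum_neg_distrib]; ring
  have hE : ∀ A : Finset V, (((B ×ˢ A).filter (fun e => G.Adj e.1 e.2)).card : ℝ)
      = ∑ i ∈ B, ∑ j ∈ A, (if G.Adj i j then (1:ℝ) else 0) := by
    intro A
    rw [Finset.card_filter]
    push_cast
    rw [Finset.sum_product]
  have hle : (((B ×ˢ P).filter (fun e => G.Adj e.1 e.2)).card : ℝ)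
      ≤ ((B ×ˢ N).filter (fun e => G.Adj e.1 e.2)).card := by
    rw [hE P, hE N]
    have hs : ∑ i ∈ B, ((∑ j ∈ P, (if G.Adj i j then (1:ℝ) else 0))
        - ∑ j ∈ N, (if G.Adj i j then (1:ℝ) else 0)) ≤ 0 := by
      apply Finset.sum_nonpos
      intro i hi
      rw [← hnbr i]
      have hz : z i = -1 := (mem_filter.mp hi).2
      have hsgn : Real.sign (∑ j ∈ G.neighborFinset i, y j) = -1 := by
        rw [← hdyn i]; exact hz
      rcases lt_trichotomy (∑ j ∈ G.neighborFinset i, y j) 0 with h | h | h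
      · linarith
      · rw [h] at hsgn; simp [Real.sign_zero] at hsgn
      · rw [Real.sign_of_pos h] at hsgn; norm_num at hsgn
    rw [Finset.sum_sub_distrib] at hs
    linarith
  have l1 := (abs_le.mp (hmix B P)).1
  have l2 := (abs_le.mp (hmix B N)).2
  have hkey : p * B.card * ((P.card : ℝ) - N.card)
      ≤ lam * (Real.sqrt (B.card * P.card) + Real.sqrt (B.card * N.card)) := by
    nlinarith [hle]
  have hs2 : Real.sqrt ((B.card : ℝ) * P.card) + Real.sqrt ((B.card : ℝ) * N.card)
      ≤ Real.sqrt (2 * (B.card * Fintype.card V)) := by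
    have e1 : Real.sqrt ((B.card : ℝ) * P.card) ^ 2 = (B.card : ℝ) * P.card :=
      Real.sq_sqrt (by positivity)
    have e2 : Real.sqrt ((B.card : ℝ) * N.card) ^ 2 = (B.card : ℝ) * N.card :=
      Real.sq_sqrt (by positivity)
    have ht := two_mul_le_add_sq (Real.sqrt ((B.card : ℝ) * P.card))
      (Real.sqrt ((B.card : ℝ) * N.card))
    have hsqsum : (Real.sqrt ((B.card : ℝ) * P.card)
        + Real.sqrt ((B.card : ℝ) * N.card)) ^ 2
        ≤ 2 * ((B.card : ℝ) * Fintype.card V) := by nlinarith [hcard]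
    calc Real.sqrt ((B.card : ℝ) * P.card) + Real.sqrt ((B.card : ℝ) * N.card)
        = Real.sqrt ((Real.sqrt ((B.card : ℝ) * P.card)
            + Real.sqrt ((B.card : ℝ) * N.card)) ^ 2) :=
          (Real.sqrt_sq (by positivity)).symm
      _ ≤ Real.sqrt (2 * ((B.card : ℝ) * Fintype.card V)) := Real.sqrt_le_sqrt hsqsum
  have hmean' : α * (Fintype.card V : ℝ) ≤ (P.card : ℝ) - N.card := by
    rw [hsum] at hmean; exact hmean
  have hchain : p * B.card * (α * Fintype.card V)
      ≤ lam * Real.sqrt (2 * ((B.card : ℝ) * Fintype.card V)) := by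
    have h1 : p * B.card * (α * Fintype.card V)
        ≤ p * B.card * ((P.card : ℝ) - N.card) :=
      mul_le_mul_of_nonneg_left hmean' (by positivity)
    have h2 : lam * (Real.sqrt ((B.card : ℝ) * P.card)
        + Real.sqrt ((B.card : ℝ) * N.card))
        ≤ lam * Real.sqrt (2 * ((B.card : ℝ) * Fintype.card V)) :=
      mul_le_mul_of_nonneg_left hs2 hlam
    linarith
  have hL : 0 ≤ p * B.card * (α * Fintype.card V) := by positivity
  have hq : (lam * Real.sqrt (2 * ((B.card : ℝ) * Fintype.card V))) ^ 2
      = lam ^ 2 * (2 * ((B.card : ℝ) * Fintype.card V)) := by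
    rw [mul_pow, Real.sq_sqrt (by positivity)]
  have hsq : (p * B.card * (α * Fintype.card V)) ^ 2
      ≤ lam ^ 2 * (2 * ((B.card : ℝ) * Fintype.card V)) := by
    calc (p * B.card * (α * Fintype.card V)) ^ 2
        = (p * B.card * (α * Fintype.card V)) * (p * B.card * (α * Fintype.card V)) := sq _
      _ ≤ (lam * Real.sqrt (2 * ((B.card : ℝ) * Fintype.card V)))
          * (lam * Real.sqrt (2 * ((B.card : ℝ) * Fintype.card V))) :=
          mul_self_le_mul_self hL hchain
      _ = (lam * Real.sqrt (2 * ((B.card : ℝ) * Fintype.card V))) ^ 2 := (sq _).symm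
      _ = lam ^ 2 * (2 * ((B.card : ℝ) * Fintype.card V)) := hq
  rw [le_div_iff₀ (by positivity)]
  have h3 : (B.card : ℝ) * (α ^ 2 * p ^ 2 * Fintype.card V) * (B.card * Fintype.card V)
      ≤ 2 * lam ^ 2 * (B.card * Fintype.card V) := by
    calc (B.card : ℝ) * (α ^ 2 * p ^ 2 * Fintype.card V) * (B.card * Fintype.card V)
        = (p * B.card * (α * Fintype.card V)) ^ 2 := by ring
      _ ≤ lam ^ 2 * (2 * ((B.card : ℝ) * Fintype.card V)) := hsq
      _ = 2 * lam ^ 2 * (B.card * Fintype.card V) := by ring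
  exact le_of_mul_le_mul_right h3 (mul_pos hbpos hnpos)

/-- **Expander Mixing Lemma implies fast homogenization of majority dynamics.**
Suppose the finite graph `G` on `n` vertices satisfies
`|E(A,B) - p|A||B|| ≤ λ √(|A||B|)` for all vertex sets `A, B`, where
`E(A,B) = #{(u,v) : u ∈ A, v ∈ B, u ~ v}`.  If at some time `t` the global
mean `m t = (1/n) ∑ᵢ x t i` of the (tie-free) majority dynamics satisfies
`|m t| ≥ α > 0`, then at most `2λ²/(α² p² n)` vertices `i` have
`x (t+1) i = -sgn (m t)`. -/
theorem expander_mixing_majority_step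
    {V : Type*} [Fintype V] [DecidableEq V]
    (G : SimpleGraph V) [DecidableRel G.Adj]
    (p lam : ℝ) (hp : 0 < p)
    (hmix : ∀ A B : Finset V,
      |((((A ×ˢ B).filter (fun e => G.Adj e.1 e.2)).card : ℝ))
          - p * A.card * B.card|
        ≤ lam * Real.sqrt (A.card * B.card))
    (x : ℕ → V → ℝ)
    (hx : ∀ (t : ℕ) (i : V), x t i = 1 ∨ x t i = -1)
    (hties : ∀ (t : ℕ) (i : V), (∑ j ∈ G.neighborFinset i, x t j) ≠ 0)
    (hdyn : ∀ (t : ℕ) (i : V),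
      x (t + 1) i = Real.sign (∑ j ∈ G.neighborFinset i, x t j))
    (t : ℕ) (α : ℝ) (hα : 0 < α)
    (hmean : α ≤ |(∑ i : V, x t i) / (Fintype.card V)|) :
    ((Finset.univ.filter (fun i : V =>
        x (t + 1) i = -Real.sign ((∑ i : V, x t i) / (Fintype.card V)))).card
      : ℝ)
      ≤ 2 * lam ^ 2 / (α ^ 2 * p ^ 2 * (Fintype.card V)) := by
  classical
  have hne : Nonempty V := by
    by_contra h
    rw [not_nonempty_iff] at h
    have h0 : (∑ i : V, x t i) = 0 := by simp
    rw [h0] at hmean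
    simp at hmean
    linarith
  have hnpos : (0:ℝ) < (Fintype.card V : ℝ) := by exact_mod_cast Fintype.card_pos
  rcases lt_trichotomy (∑ i : V, x t i) 0 with hSneg | hS0 | hSpos
  · have hm : (∑ i : V, x t i) / (Fintype.card V : ℝ) < 0 :=
      div_neg_of_neg_of_pos hSneg hnpos
    have hsgn : Real.sign ((∑ i : V, x t i) / (Fintype.card V : ℝ)) = -1 :=
      Real.sign_of_neg hm
    have hmean' : α * (Fintype.card V : ℝ) ≤ ∑ i : V, -(x t i) := by
      rw [abs_of_neg hm] at hmean
      have h1 : α * (Fintype.card V : ℝ) ≤ -(∑ i : V, x t i) := by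
        calc α * (Fintype.card V : ℝ)
            ≤ -((∑ i : V, x t i) / (Fintype.card V : ℝ)) * (Fintype.card V : ℝ) :=
              mul_le_mul_of_nonneg_right hmean (le_of_lt hnpos)
          _ = -(∑ i : V, x t i) := by
              rw [neg_mul, div_mul_cancel₀ _ (ne_of_gt hnpos)]
      rw [Finset.sum_neg_distrib]
      exact h1
    simp only [hsgn, neg_neg]
    have haux := aux_majority G p lam hp hmix (fun i => -(x t i)) (fun i => -(x (t+1) i))
      (fun i => (hx t i).elim (fun h => Or.inr (by simp [h])) (fun h => Or.inl (by simp [h])))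
      (fun i => by
        have hns : ∑ j ∈ G.neighborFinset i, -(x t j)
            = -∑ j ∈ G.neighborFinset i, x t j := by
          rw [Finset.sum_neg_distrib]
        show -(x (t+1) i) = Real.sign (∑ j ∈ G.neighborFinset i, -(x t j))
        rw [hns, Real.sign_neg, hdyn t i])
      α hα hmean'
    have hfe : Finset.univ.filter (fun i : V => x (t + 1) i = 1)
        = Finset.univ.filter (fun i : V => -(x (t + 1) i) = -1) := by
      apply Finset.filter_congr
      intro i _
      constructor
      · intro h; rw [h]
      · intro h; linarith
    rw [hfe]
    exact haux
  · rw [hS0] at hmean; simp at hmean; linarith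
  · have hm : 0 < (∑ i : V, x t i) / (Fintype.card V : ℝ) :=
      div_pos hSpos hnpos
    have hsgn : Real.sign ((∑ i : V, x t i) / (Fintype.card V : ℝ)) = 1 :=
      Real.sign_of_pos hm
    have hmean' : α * (Fintype.card V : ℝ) ≤ ∑ i : V, x t i := by
      rw [abs_of_pos hm] at hmean
      calc α * (Fintype.card V : ℝ)
          ≤ (∑ i : V, x t i) / (Fintype.card V : ℝ) * (Fintype.card V : ℝ) :=
            mul_le_mul_of_nonneg_right hmean (le_of_lt hnpos)
        _ = ∑ i : V, x t i := div_mul_cancel₀ _ (ne_of_gt hnpos)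
    simp only [hsgn]
    exact aux_majority G p lam hp hmix (x t) (x (t+1)) (hx t)
      (fun i => hdyn t i) α hα hmean'
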